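/- Let α, γ be weak compositions. If rajcode(α) = rajcode(γ), then dark(α) = dark(γ); that is, the snow diagrams of D(α) and D(γ) have their dark clouds at identical positions. -/
import Mathlib


open scoped Classical

noncomputable section

/-- A weak composition: a finitely supported sequence of naturals.  Indices are
thought of as positive integers; index `0` is required to satisfy `α 0 = 0`. -/
abbrev WeakComp := ℕ →₀ ℕ

/-- A weak composition is snowy if its positive entries are pairwise distinct. -/
def Snowy (α : WeakComp) : Prop :=
  ∀ r r', 0 < α r → α r = α r' → r = r'

/-- The key diagram of a weak composition: the left-justified diagram with
`α r` cells in row `r` (columns `1, …, α r`). -/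
def keyDiagram (α : WeakComp) : Finset (ℕ × ℕ) :=
  α.support.biUnion fun r => (Finset.Icc 1 (α r)).image fun c => (r, c)

/-- Largest row index occurring in a diagram. -/
def rowBound (D : Finset (ℕ × ℕ)) : ℕ := (D.image Prod.fst).sup id

/-- One step of the snow-diagram algorithm: in row `r`, mark as a dark cloud the
rightmost cell of `D` whose column contains no dark cloud of `S` yet. -/
def darkStep (D S : Finset (ℕ × ℕ)) (r : ℕ) : Finset (ℕ × ℕ) :=
  let cols := (D.filter fun p => p.1 = r ∧ ∀ q ∈ S, q.2 ≠ p.2).image Prod.snd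
  if h : cols.Nonempty then insert (r, cols.max' h) S else S

/-- Process rows `N, N-1, …, N-k+1` from bottom to top. -/
def darkAux (D : Finset (ℕ × ℕ)) (N : ℕ) : ℕ → Finset (ℕ × ℕ)
  | 0 => ∅
  | k + 1 => darkStep D (darkAux D N k) (N - k)

/-- The dark cloud diagram of a diagram `D`: iterate the rows of `D` from bottom
to top, marking in each row the rightmost cell whose column contains no dark
cloud from a lower row. -/
def dark (D : Finset (ℕ × ℕ)) : Finset (ℕ × ℕ) := darkAux D (rowBound D) (rowBound D)

/-- The underlying diagram of the snow diagram of `D`: the cells of `D` together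
with all (snowflake) positions above a dark cloud in its column. -/
def snow (D : Finset (ℕ × ℕ)) : Finset (ℕ × ℕ) :=
  D ∪ (dark D).biUnion fun p => (Finset.Icc 1 p.1).image fun r => (r, p.2)

/-- `rajcode` of a diagram: the number of cells in row `r` of its snow diagram. -/
def rajcodeD (D : Finset (ℕ × ℕ)) (r : ℕ) : ℕ :=
  ((snow D).filter fun p => p.1 = r).card

/-- `raj` of a diagram: the total number of cells of its snow diagram. -/
def rajD (D : Finset (ℕ × ℕ)) : ℕ := (snow D).card

/-- `rajcode` of a weak composition. -/
def rajcode (α : WeakComp) (r : ℕ) : ℕ := rajcodeD (keyDiagram α) r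

/-- `raj` of a weak composition. -/
def raj (α : WeakComp) : ℕ := rajD (keyDiagram α)

/-- Non-attacking rook diagram: a finite subset of `ℤ_{>0} × ℤ_{>0}` with at
most one cell in each row and at most one cell in each column. -/
def IsRook (R : Finset (ℕ × ℕ)) : Prop :=
  (∀ p ∈ R, 1 ≤ p.1 ∧ 1 ≤ p.2) ∧
    ∀ p ∈ R, ∀ q ∈ R, (p.1 = q.1 ∨ p.2 = q.2) → p = q

/-- The sum `|α|` of the entries of a weak composition. -/
def wsum (α : WeakComp) : ℕ := α.sum fun _ v => v

/-- The number of pairs `(r, r')` with `1 ≤ r < r'` and `α r < α r'`. -/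
def invCount (α : WeakComp) : ℕ :=
  ((Finset.Icc 1 (α.support.sup id) ×ˢ α.support).filter fun p =>
      p.1 < p.2 ∧ α p.1 < α p.2).card

/-- Swap entries `i` and `i+1` of a weak composition. -/
def swapEntries (i : ℕ) (α : WeakComp) : WeakComp :=
  Finsupp.equivMapDomain (Equiv.swap i (i + 1)) α

/-- The Rothe diagram of `w ∈ S_n`, in 1-based coordinates:
`{(r, w(r')) : r < r', w(r) > w(r')}`. -/
def rothe {n : ℕ} (w : Equiv.Perm (Fin n)) : Finset (ℕ × ℕ) :=
  (Finset.univ.filter fun p : Fin n × Fin n => p.1 < p.2 ∧ w p.2 < w p.1).image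
    fun p => ((p.1 : ℕ) + 1, (w p.2 : ℕ) + 1)

/-- Length of the longest increasing subsequence of `w` starting at position `r`
(equivalently, starting with the value `w r`). -/
def LISfrom {n : ℕ} (w : Equiv.Perm (Fin n)) (r : Fin n) : ℕ :=
  Finset.sup (Finset.univ.filter fun s : Finset (Fin n) =>
      r ∈ s ∧ (∀ i ∈ s, r ≤ i) ∧ ∀ i ∈ s, ∀ j ∈ s, i < j → w i < w j)
    Finset.card

/-- Insert `x` into a strictly decreasing row: replace the largest entry `< x`
(returning it as bumped), or append `x` at the end. -/
def insertRow : List ℕ → ℕ → List ℕ × Option ℕ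
  | [], x => ([x], none)
  | a :: t, x =>
      if a < x then (x :: t, some a)
      else (a :: (insertRow t x).1, (insertRow t x).2)

/-- The 1-based value of `w` at 0-based position `i` (0 if out of range). -/
def oneline {n : ℕ} (w : Equiv.Perm (Fin n)) (i : ℕ) : ℕ :=
  if h : i < n then (w ⟨i, h⟩ : ℕ) + 1 else 0

/-- Row one of the Schensted insertion tableau after the first `k` insertions of
the values `w(n), w(n-1), …` (1-based values, inserted from the last position). -/
def rowOneAux {n : ℕ} (w : Equiv.Perm (Fin n)) : ℕ → List ℕ
  | 0 => []
  | k + 1 => (insertRow (rowOneAux w k) (oneline w (n - 1 - k))).1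

/-- The value bumped from row one when the value `w r` is inserted (during the
Schensted insertion of `w(n), …, w(1)` into the empty tableau); `none` if `w r`
is appended at the end of row one. -/
def bumpedFromRowOne {n : ℕ} (w : Equiv.Perm (Fin n)) (r : Fin n) : Option ℕ :=
  (insertRow (rowOneAux w (n - 1 - (r : ℕ))) (oneline w (r : ℕ))).2

/-- Position `i` starts a maximal decreasing run of `u` (in one-line notation). -/
def IsRunStart {n : ℕ} (u : Equiv.Perm (Fin n)) (i : Fin n) : Prop :=
  ∀ j : Fin n, (j : ℕ) + 1 = (i : ℕ) → u j < u i

/-- A fireworks permutation: the initial elements of its maximal decreasing runs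
are increasing. -/
def Fireworks {n : ℕ} (u : Equiv.Perm (Fin n)) : Prop :=
  ∀ i j : Fin n, IsRunStart u i → IsRunStart u j → i < j → u i < u j

/-- An inverse fireworks permutation. -/
def InverseFireworks {n : ℕ} (w : Equiv.Perm (Fin n)) : Prop := Fireworks w⁻¹

/-- The `n`-th Bell number: the number of set partitions (equivalence relations)
of an `n`-element set. -/
def bell (n : ℕ) : ℕ := Nat.card (Setoid (Fin n))

/-- The staircase board `Stair_n = {(r,c) : 1 ≤ r ≤ n-1, 1 ≤ c ≤ n-r}`. -/
def stair (n : ℕ) : Finset (ℕ × ℕ) :=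
  (Finset.Icc 1 n ×ˢ Finset.Icc 1 n).filter fun p => p.1 ≤ n - 1 ∧ p.2 ≤ n - p.1

/-- All cells weakly above a rook of `R` in its column, or weakly to the left of
a rook of `R` in its row. -/
def hooks (R : Finset (ℕ × ℕ)) : Finset (ℕ × ℕ) :=
  R.biUnion fun p =>
    ((Finset.Icc 1 p.1).image fun r => (r, p.2)) ∪
      ((Finset.Icc 1 p.2).image fun c => (p.1, c))

/-- The Northwest number `NW(R)`. -/
def NW (R : Finset (ℕ × ℕ)) : ℕ := (hooks R).card

/-- The Garsia–Remmel statistic: the number of cells of `Stair_n` that are not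
weakly above a rook in its column and not weakly to the left of a rook in its
row. -/
def GRcount (n : ℕ) (R : Finset (ℕ × ℕ)) : ℕ :=
  ((stair n).filter fun q =>
      ¬ ∃ p ∈ R, (p.2 = q.2 ∧ q.1 ≤ p.1) ∨ (p.1 = q.1 ∧ q.2 ≤ p.2)).card

/-- Garsia–Remmel `q`-Stirling numbers of the second kind. -/
def qStirling : ℕ → ℕ → Polynomial ℤ
  | 0, 0 => 1
  | 0, _ + 1 => 0
  | _ + 1, 0 => 0
  | n + 1, k + 1 =>
      Polynomial.X ^ k * qStirling n k +
        (∑ i ∈ Finset.range (k + 1), Polynomial.X ^ i) * qStirling n (k + 1)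

/-- The `q`-Bell polynomial `B_n(q) = Σ_{k=0}^n S_{n,k}(q)`. -/
def qBell (n : ℕ) : Polynomial ℤ := ∑ k ∈ Finset.range (n + 1), qStirling n k

/-- Tail lexicographic order on exponent vectors: `γ < α` iff there is `k` with
`γ k < α k` and `γ j = α j` for all `j > k`. -/
def TailLt (γ α : ℕ →₀ ℕ) : Prop :=
  ∃ k, γ k < α k ∧ ∀ j, k < j → γ j = α j



section Aux

private lemma mem_keyDiagram (α : WeakComp) (p : ℕ × ℕ) :
    p ∈ keyDiagram α ↔ 1 ≤ p.2 ∧ p.2 ≤ α p.1 := by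
  obtain ⟨r, c⟩ := p
  simp only [keyDiagram, Finset.mem_biUnion, Finset.mem_image, Finset.mem_Icc,
    Finsupp.mem_support_iff, Prod.mk.injEq]
  constructor
  · rintro ⟨r', _, c', hc', rfl, rfl⟩; exact hc'
  · rintro ⟨h1, h2⟩; exact ⟨r, by omega, c, ⟨h1, h2⟩, rfl, rfl⟩

private lemma darkStep_eq (D S : Finset (ℕ × ℕ)) (r : ℕ) (A : Finset ℕ)
    (hA : ((D.filter fun p => p.1 = r ∧ ∀ q ∈ S, q.2 ≠ p.2).image Prod.snd) = A) :
    darkStep D S r = if h : A.Nonempty then insert (r, A.max' h) S else S := by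
  subst hA; rfl

private lemma key_cols (α : WeakComp) (S : Finset (ℕ × ℕ)) (r : ℕ) :
    (((keyDiagram α).filter fun p => p.1 = r ∧ ∀ q ∈ S, q.2 ≠ p.2).image Prod.snd)
      = Finset.Icc 1 (α r) \ S.image Prod.snd := by
  ext c
  simp only [Finset.mem_image, Finset.mem_filter, Finset.mem_sdiff, Finset.mem_Icc,
    mem_keyDiagram]
  constructor
  · rintro ⟨⟨r', c'⟩, ⟨⟨h1, h2⟩, rfl, hq⟩, rfl⟩
    exact ⟨⟨h1, h2⟩, by rintro ⟨q, hq', rfl⟩; exact hq q hq' rfl⟩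
  · rintro ⟨⟨h1, h2⟩, hc⟩
    exact ⟨(r, c), ⟨⟨h1, h2⟩, rfl, fun q hq he => hc ⟨q, hq, he⟩⟩, rfl⟩

private lemma darkAux_mem (α : WeakComp) (N k : ℕ) (hk : k ≤ N) :
    ∀ p ∈ darkAux (keyDiagram α) N k,
      N - k < p.1 ∧ p.1 ≤ N ∧ 1 ≤ p.2 ∧ p.2 ≤ α p.1 := by
  induction k with
  | zero => simp [darkAux]
  | succ k ih =>
    intro p hp
    rw [darkAux, darkStep_eq _ _ _ _ (key_cols α _ _)] at hp
    split at hp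
    · next hA =>
      rcases Finset.mem_insert.mp hp with rfl | hp
      · have hm := Finset.max'_mem _ hA
        rw [Finset.mem_sdiff, Finset.mem_Icc] at hm
        exact ⟨by omega, by omega, hm.1.1, hm.1.2⟩
      · have := ih (by omega) p hp; omega
    · have := ih (by omega) p hp; omega

private lemma subset_darkStep (D S : Finset (ℕ × ℕ)) (r : ℕ) : S ⊆ darkStep D S r := by
  rw [darkStep_eq D S r _ rfl]
  split
  · exact Finset.subset_insert _ _
  · exact Finset.Subset.refl _

private lemma darkAux_subset (D : Finset (ℕ × ℕ)) (N : ℕ) {k k' : ℕ} (h : k ≤ k') :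
    darkAux D N k ⊆ darkAux D N k' := by
  induction k', h using Nat.le_induction with
  | base => exact subset_rfl
  | succ n hn ih => exact ih.trans (subset_darkStep _ _ _)

private lemma darkAux_filter (α : WeakComp) (N r : ℕ) (hr : r ≤ N) :
    ∀ k, N - r ≤ k → k ≤ N →
      (darkAux (keyDiagram α) N k).filter (fun p => r < p.1)
        = darkAux (keyDiagram α) N (N - r) := by
  intro k hk1
  induction k, hk1 using Nat.le_induction with
  | base =>
    intro _
    apply Finset.filter_true_of_mem
    intro p hp
    have := darkAux_mem α N (N - r) (by omega) p hp
    omega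
  | succ n hn ih =>
    intro hn2
    have ih' := ih (by omega)
    rw [darkAux, darkStep_eq _ _ _ _ (key_cols α _ _)]
    split
    · rw [Finset.filter_insert, if_neg (by simp only []; omega), ih']
    · exact ih'

private lemma snow_row (α : WeakComp) (r : ℕ) (hr1 : 1 ≤ r)
    (hrN : r ≤ rowBound (keyDiagram α)) :
    ((snow (keyDiagram α)).filter fun p => p.1 = r) =
      (Finset.Icc 1 (α r) ∪ (darkAux (keyDiagram α) (rowBound (keyDiagram α))
        (rowBound (keyDiagram α) - r)).image Prod.snd).image fun c => (r, c) := by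
  set N := rowBound (keyDiagram α) with hN
  ext ⟨x, c⟩
  simp only [snow, dark, Finset.mem_filter, Finset.mem_union, Finset.mem_biUnion,
    Finset.mem_image, Finset.mem_Icc, mem_keyDiagram, Prod.mk.injEq]
  constructor
  · rintro ⟨hmem, rfl⟩
    refine ⟨c, ?_, rfl, rfl⟩
    rcases hmem with hc | ⟨q, hq, y, hy, rfl, rfl⟩
    · exact Or.inl hc
    · rcases eq_or_lt_of_le hy.2 with hxy | hxy
      · have hinv := darkAux_mem α N N le_rfl q hq
        exact Or.inl ⟨hinv.2.2.1, hxy ▸ hinv.2.2.2⟩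
      · have hmf : q ∈ (darkAux (keyDiagram α) N N).filter (fun p => y < p.1) :=
          Finset.mem_filter.mpr ⟨hq, hxy⟩
        rw [darkAux_filter α N y hrN N (by omega) le_rfl] at hmf
        exact Or.inr ⟨q, hmf, rfl⟩
  · rintro ⟨c', hc', rfl, rfl⟩
    refine ⟨?_, rfl⟩
    rcases hc' with hc | ⟨q, hq, rfl⟩
    · exact Or.inl hc
    · have hinv := darkAux_mem α N (N - r) (by omega) q hq
      refine Or.inr ⟨q, darkAux_subset _ _ (by omega) hq, r, ⟨hr1, by omega⟩, rfl, rfl⟩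

private lemma rajcode_eq (α : WeakComp) (r : ℕ) (hr1 : 1 ≤ r)
    (hrN : r ≤ rowBound (keyDiagram α)) :
    rajcode α r = (Finset.Icc 1 (α r) ∪ (darkAux (keyDiagram α) (rowBound (keyDiagram α))
      (rowBound (keyDiagram α) - r)).image Prod.snd).card := by
  rw [rajcode, rajcodeD, snow_row α r hr1 hrN,
    Finset.card_image_of_injective _ (fun a b hab => by simpa using hab)]

private lemma rajcode_eq_zero_of_lt (α : WeakComp) (r : ℕ)
    (hrN : rowBound (keyDiagram α) < r) : rajcode α r = 0 := by
  rw [rajcode, rajcodeD, Finset.card_eq_zero, Finset.filter_eq_empty_iff]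
  rintro ⟨x, c⟩ hmem
  simp only [snow, dark, Finset.mem_union, Finset.mem_biUnion, Finset.mem_image,
    Finset.mem_Icc, Prod.mk.injEq] at hmem
  have hx : x ≤ rowBound (keyDiagram α) := by
    rcases hmem with hm | ⟨q, hq, y, hy, rfl, rfl⟩
    · exact Finset.le_sup (f := id) (Finset.mem_image_of_mem Prod.fst hm)
    · have := darkAux_mem α _ _ le_rfl q hq
      omega
  simp only []
  omega

private lemma rowBound_mem (α : WeakComp) (hα : α 0 = 0)
    (hne : (keyDiagram α).Nonempty) :
    0 < α (rowBound (keyDiagram α)) ∧ 1 ≤ rowBound (keyDiagram α) := by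
  obtain ⟨b, hb, hsup⟩ := Finset.exists_mem_eq_sup _ (hne.image Prod.fst) id
  obtain ⟨p, hp, rfl⟩ := Finset.mem_image.mp hb
  have hm := (mem_keyDiagram α p).mp hp
  have hrb : rowBound (keyDiagram α) = p.1 := hsup
  rw [hrb]
  refine ⟨by omega, ?_⟩
  by_contra hc
  have : p.1 = 0 := by omega
  rw [this, hα] at hm
  omega

private lemma rajcode_rowBound (α : WeakComp) (hα : α 0 = 0)
    (hne : (keyDiagram α).Nonempty) :
    rajcode α (rowBound (keyDiagram α)) = α (rowBound (keyDiagram α)) := by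
  obtain ⟨hpos, hN⟩ := rowBound_mem α hα hne
  rw [rajcode_eq α _ hN le_rfl, Nat.sub_self]
  show (Finset.Icc 1 _ ∪ (∅ : Finset (ℕ × ℕ)).image Prod.snd).card = _
  rw [Finset.image_empty, Finset.union_empty, Nat.card_Icc]
  omega

private lemma dark_empty : dark (∅ : Finset (ℕ × ℕ)) = ∅ := by
  simp [dark, rowBound, darkAux]

private lemma rajcode_of_empty (α : WeakComp) (he : keyDiagram α = ∅) (r : ℕ) :
    rajcode α r = 0 := by
  rw [rajcode, rajcodeD, snow, he, dark_empty]
  simp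

private lemma Icc_sdiff_eq (a b : ℕ) (C : Finset ℕ)
    (hcard : (Finset.Icc 1 a \ C).card = (Finset.Icc 1 b \ C).card) :
    Finset.Icc 1 a \ C = Finset.Icc 1 b \ C := by
  rcases le_total a b with hab | hab
  · exact Finset.eq_of_subset_of_card_le
      (Finset.sdiff_subset_sdiff (Finset.Icc_subset_Icc_right hab) subset_rfl) hcard.ge
  · exact (Finset.eq_of_subset_of_card_le
      (Finset.sdiff_subset_sdiff (Finset.Icc_subset_Icc_right hab) subset_rfl) hcard.le).symm

end Aux

/-- equal rajcodes imply identical dark cloud positions. -/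
theorem dark_eq_of_rajcode_eq (α γ : WeakComp) (hα : α 0 = 0) (hγ : γ 0 = 0)
    (h : ∀ r, rajcode α r = rajcode γ r) :
    dark (keyDiagram α) = dark (keyDiagram γ) := by
  by_cases hne : (keyDiagram α).Nonempty
  · have hneγ : (keyDiagram γ).Nonempty := by
      by_contra hc
      rw [Finset.not_nonempty_iff_eq_empty] at hc
      have h1 := rajcode_rowBound α hα hne
      have h2 := rajcode_of_empty γ hc (rowBound (keyDiagram α))
      have h3 := (rowBound_mem α hα hne).1
      rw [h (rowBound (keyDiagram α)), h2] at h1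
      omega
    -- equal row bounds
    have hNN : rowBound (keyDiagram α) = rowBound (keyDiagram γ) := by
      by_contra hc
      rcases Nat.lt_or_ge (rowBound (keyDiagram α)) (rowBound (keyDiagram γ)) with hlt | hge
      · have h1 := rajcode_rowBound γ hγ hneγ
        have h2 := rajcode_eq_zero_of_lt α _ hlt
        have h3 := (rowBound_mem γ hγ hneγ).1
        rw [← h (rowBound (keyDiagram γ)), h2] at h1
        omega
      · have hlt : rowBound (keyDiagram γ) < rowBound (keyDiagram α) := by omega
        have h1 := rajcode_rowBound α hα hne
        have h2 := rajcode_eq_zero_of_lt γ _ hlt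
        have h3 := (rowBound_mem α hα hne).1
        rw [h (rowBound (keyDiagram α)), h2] at h1
        omega
    set N := rowBound (keyDiagram α) with hNdef
    have key : ∀ k, k ≤ N → darkAux (keyDiagram α) N k = darkAux (keyDiagram γ) N k := by
      intro k
      induction k with
      | zero => intro _; rfl
      | succ k ih =>
        intro hk
        have ihk := ih (by omega)
        have hr1 : 1 ≤ N - k := by omega
        have hkr : N - (N - k) = k := by omega
        have hrc := h (N - k)
        rw [rajcode_eq α (N - k) hr1 (by rw [← hNdef]; omega),
          rajcode_eq γ (N - k) hr1 (by rw [← hNN]; omega)] at hrc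
        rw [← hNdef, ← hNN, hkr, ← ihk] at hrc
        have hcard : (Finset.Icc 1 (α (N - k)) \ (darkAux (keyDiagram α) N k).image Prod.snd).card
            = (Finset.Icc 1 (γ (N - k)) \ (darkAux (keyDiagram α) N k).image Prod.snd).card := by
          have e1 := Finset.card_sdiff_add_card (Finset.Icc 1 (α (N - k)))
            ((darkAux (keyDiagram α) N k).image Prod.snd)
          have e2 := Finset.card_sdiff_add_card (Finset.Icc 1 (γ (N - k)))
            ((darkAux (keyDiagram α) N k).image Prod.snd)
          omega
        have hsets := Icc_sdiff_eq (α (N - k)) (γ (N - k))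
          ((darkAux (keyDiagram α) N k).image Prod.snd) hcard
        show darkStep (keyDiagram α) (darkAux (keyDiagram α) N k) (N - k)
          = darkStep (keyDiagram γ) (darkAux (keyDiagram γ) N k) (N - k)
        rw [darkStep_eq _ _ _ _ (key_cols α _ _), darkStep_eq _ _ _ _ (key_cols γ _ _),
          ← ihk, hsets]
    show darkAux (keyDiagram α) (rowBound (keyDiagram α)) (rowBound (keyDiagram α))
      = darkAux (keyDiagram γ) (rowBound (keyDiagram γ)) (rowBound (keyDiagram γ))
    rw [← hNN, ← hNdef]
    exact key N le_rfl
  · rw [Finset.not_nonempty_iff_eq_empty] at hne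
    have hneγ : keyDiagram γ = ∅ := by
      by_contra hc
      have hc' : (keyDiagram γ).Nonempty := Finset.nonempty_iff_ne_empty.mpr hc
      have h1 := rajcode_rowBound γ hγ hc'
      have h2 := rajcode_of_empty α hne (rowBound (keyDiagram γ))
      have h3 := (rowBound_mem γ hγ hc').1
      rw [← h (rowBound (keyDiagram γ)), h2] at h1
      omega
    rw [hne, hneγ]

end
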